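/- If f_u satisfies the group-affine property f_u(X₁X₂) = f_u(X₁)X₂ + X₁f_u(X₂) − X₁f_u(I)X₂ for all X₁, X₂ in a matrix group G, and X̂ and X are two trajectories both satisfying dX/dt = f_u(X), then the right-invariant error η = X̂X⁻¹ satisfies dη/dt = f_u(η) − η f_u(I). -/

import Mathlib

open Matrix

section LinftyAux

variable {n : ℕ}

attribute [local instance] Matrix.linftyOpNormedRing Matrix.linftyOpNormedAlgebra

lemma entry_hasDerivAt {Y : ℝ → Matrix (Fin n) (Fin n) ℝ} {A : Matrix (Fin n) (Fin n) ℝ} {t : ℝ}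
    (h : HasDerivAt Y A t) (i j : Fin n) :
    HasDerivAt (fun s => Y s i j) (A i j) t := by
  let L : Matrix (Fin n) (Fin n) ℝ →ₗ[ℝ] ℝ :=
    { toFun := fun M => M i j
      map_add' := by intros; rfl
      map_smul' := by intros; rfl }
  exact (L.toContinuousLinearMap.hasFDerivAt (x := Y t)).comp_hasDerivAt t h

lemma hasDerivAt_of_entries {Y : ℝ → Matrix (Fin n) (Fin n) ℝ} {A : Matrix (Fin n) (Fin n) ℝ}
    {t : ℝ} (h : ∀ i j, HasDerivAt (fun s => Y s i j) (A i j) t) :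
    HasDerivAt Y A t := by
  have h1 : HasDerivAt (fun s => ∑ i, ∑ j, Matrix.single i j (Y s i j))
      (∑ i, ∑ j, Matrix.single i j (A i j)) t := by
    apply HasDerivAt.fun_sum
    intro i _
    apply HasDerivAt.fun_sum
    intro j _
    have := (h i j).smul_const (Matrix.single i j (1 : ℝ))
    simpa [Matrix.smul_single, smul_eq_mul, mul_one] using this
  have hYeq : (fun s => Y s) = fun s => ∑ i, ∑ j, Matrix.single i j (Y s i j) := by
    funext s
    exact Matrix.matrix_eq_sum_single (Y s)
  have hAeq : A = ∑ i, ∑ j, Matrix.single i j (A i j) :=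
    Matrix.matrix_eq_sum_single A
  rw [show Y = fun s => Y s from rfl, hYeq, hAeq]
  exact h1

lemma t2_linfty (G : Set (Matrix (Fin n) (Fin n) ℝ))
    (f : Matrix (Fin n) (Fin n) ℝ → Matrix (Fin n) (Fin n) ℝ)
    (hf : ∀ X₁ ∈ G, ∀ X₂ ∈ G, f (X₁ * X₂) = f X₁ * X₂ + X₁ * f X₂ - X₁ * f 1 * X₂)
    (Xhat X : ℝ → Matrix (Fin n) (Fin n) ℝ)
    (hXG : ∀ t, X t ∈ G)
    (hXinv : ∀ t, IsUnit (X t))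
    (hηG : ∀ t, Xhat t * (X t)⁻¹ ∈ G)
    (hXhat' : ∀ t, ∀ i j, HasDerivAt (fun s => Xhat s i j) (f (Xhat t) i j) t)
    (hX' : ∀ t, ∀ i j, HasDerivAt (fun s => X s i j) (f (X t) i j) t) :
    ∀ t, ∀ i j, HasDerivAt (fun s => (Xhat s * (X s)⁻¹) i j)
      ((f (Xhat t * (X t)⁻¹) - (Xhat t * (X t)⁻¹) * f 1) i j) t := by
  intro t
  set A := Xhat t with hA
  set B := X t with hB
  obtain ⟨u, hu⟩ := hXinv t
  have hu2 : (↑u : Matrix (Fin n) (Fin n) ℝ) = B := hu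
  have hXhatD : HasDerivAt Xhat (f A) t := hasDerivAt_of_entries (hXhat' t)
  have hXD : HasDerivAt X (f B) t := hasDerivAt_of_entries (hX' t)
  have hdet : IsUnit B.det := (Matrix.isUnit_iff_isUnit_det _).mp ⟨u, hu2⟩
  have hBB : B * B⁻¹ = 1 := Matrix.mul_nonsing_inv _ hdet
  have hBB' : B⁻¹ * B = 1 := Matrix.nonsing_inv_mul _ hdet
  have hinv : HasDerivAt (fun s => (X s)⁻¹) (-(B⁻¹ * f B * B⁻¹)) t := by
    have h1 : HasDerivAt (fun s => Ring.inverse (X s))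
        ((-(ContinuousLinearMap.mulLeftRight ℝ _ ↑u⁻¹ ↑u⁻¹)) (f B)) t := by
      have h0 := hasFDerivAt_ringInverse (𝕜 := ℝ) u
      rw [hu2] at h0
      exact h0.comp_hasDerivAt t hXD
    have heq : (fun s => Ring.inverse (X s)) = fun s => (X s)⁻¹ := by
      funext s
      exact (Matrix.nonsing_inv_eq_ringInverse _).symm
    rw [heq] at h1
    convert h1 using 1
    simp only [ContinuousLinearMap.neg_apply, ContinuousLinearMap.mulLeftRight_apply]
    have hu' : (↑u⁻¹ : Matrix (Fin n) (Fin n) ℝ) = B⁻¹ := by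
      rw [Matrix.nonsing_inv_eq_ringInverse, ← hu2, Ring.inverse_unit]
    rw [hu', mul_assoc]
  have hprod := hXhatD.mul hinv
  have key := hf (A * B⁻¹) (hηG t) B (hXG t)
  rw [mul_assoc, hBB', mul_one] at key
  have hfinal : f A * B⁻¹ + A * -(B⁻¹ * f B * B⁻¹)
      = f (A * B⁻¹) - A * B⁻¹ * f 1 := by
    rw [key]
    simp only [add_mul, sub_mul, mul_assoc, hBB, mul_one]
    noncomm_ring
  rw [hfinal] at hprod
  intro i j
  exact entry_hasDerivAt hprod i j

end LinftyAux

attribute [local instance] Matrix.normedAddCommGroup Matrix.normedSpace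
/-- If `f` is group affine on a matrix group `G` and `X̂, X` are two trajectories of
`dX/dt = f(X)` in `G`, then the right-invariant error `η = X̂ X⁻¹` satisfies the
autonomous equation `dη/dt = f(η) − η f(I)`. -/
theorem t2 {n : ℕ} (G : Set (Matrix (Fin n) (Fin n) ℝ))
    (f : Matrix (Fin n) (Fin n) ℝ → Matrix (Fin n) (Fin n) ℝ)
    (hf : ∀ X₁ ∈ G, ∀ X₂ ∈ G, f (X₁ * X₂) = f X₁ * X₂ + X₁ * f X₂ - X₁ * f 1 * X₂)
    (Xhat X : ℝ → Matrix (Fin n) (Fin n) ℝ)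
    (hXhatG : ∀ t, Xhat t ∈ G) (hXG : ∀ t, X t ∈ G)
    (hXinv : ∀ t, IsUnit (X t)) (hXinvG : ∀ t, (X t)⁻¹ ∈ G)
    (hηG : ∀ t, Xhat t * (X t)⁻¹ ∈ G)
    (hXhat' : ∀ t, HasDerivAt Xhat (f (Xhat t)) t)
    (hX' : ∀ t, HasDerivAt X (f (X t)) t) :
    ∀ t, HasDerivAt (fun s => Xhat s * (X s)⁻¹)
      (f (Xhat t * (X t)⁻¹) - (Xhat t * (X t)⁻¹) * f 1) t := by
  have hXhatE : ∀ t, ∀ i j, HasDerivAt (fun s => Xhat s i j) (f (Xhat t) i j) t := by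
    intro t i j
    exact hasDerivAt_pi.mp (hasDerivAt_pi.mp (hXhat' t) i) j
  have hXE : ∀ t, ∀ i j, HasDerivAt (fun s => X s i j) (f (X t) i j) t := by
    intro t i j
    exact hasDerivAt_pi.mp (hasDerivAt_pi.mp (hX' t) i) j
  have main := t2_linfty G f hf Xhat X hXG hXinv hηG hXhatE hXE
  intro t
  exact hasDerivAt_pi.mpr fun i => hasDerivAt_pi.mpr fun j => main t i j
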